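/- Let G be a finite tree on a vertex set V with |V| = p, let a : V → ℝ assign a nonnegative real number to each vertex, and let z assign a nonnegative real number to each edge of G. Assume that for every edge e = {u,v} of G one has a(u) ≥ z(e) and a(v) ≥ z(e). Then (p−1) · Σ_{v ∈ V} a(v) ≥ p · Σ_{e ∈ E(G)} z(e). -/

import Mathlib

open SimpleGraph Walk

theorem stmt12 {V : Type*} [Fintype V] [DecidableEq V]
    (G : SimpleGraph V) [DecidableRel G.Adj] (hG : G.IsTree)
    (a : V → ℝ) (z : Sym2 V → ℝ)
    (ha : ∀ v : V, 0 ≤ a v) (hz : ∀ e ∈ G.edgeSet, 0 ≤ z e)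
    (haz : ∀ u v : V, G.Adj u v → z s(u, v) ≤ a u) :
    ((Fintype.card V : ℝ) - 1) * ∑ v : V, a v ≥
      (Fintype.card V : ℝ) * ∑ e ∈ G.edgeFinset, z e := by
  classical
  have hne := hG.isConnected.nonempty
  obtain ⟨r, -, hr⟩ := Finset.exists_max_image Finset.univ a
    ⟨Classical.arbitrary V, Finset.mem_univ _⟩
  choose f hf hf' using (hG.existsUnique_path · r)
  have key : ∑ e ∈ G.edgeFinset, z e ≤ ∑ w ∈ ({r} : Finset V)ᶜ, a w := by
    have hsum : ∑ w ∈ ({r} : Finset V)ᶜ,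
        z s(w, (f w).getVert 1) = ∑ e ∈ G.edgeFinset, z e := by
      refine Finset.sum_bij (fun w hw => ((f w).firstDart <| not_nil_of_ne (by simpa using hw)).edge)
        (fun a ha => ?memEdges) ?inj ?surj ?val
      case memEdges => simp
      case inj =>
        intros a ha b hb h
        wlog h' : (f a).length ≤ (f b).length generalizing a b
        · exact Eq.symm (this _ hb _ ha h.symm (le_of_not_ge h'))
        rw [dart_edge_eq_iff] at h
        obtain (h | h) := h
        · exact (congrArg (·.fst) h)
        · have h1 : ((f a).firstDart <| not_nil_of_ne (by simpa using ha)).snd = b :=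
            congrArg (·.snd) h
          have h3 := congrArg length (hf' _ ((f _).tail.copy h1 rfl) ?_)
          · replace h3 := (length_copy _ _ _).symm.trans h3
            rw [← add_left_inj 1,
              length_tail_add_one (not_nil_of_ne (by simpa using ha))] at h3
            omega
          · simp only [ne_eq, eq_mp_eq_cast, id_eq, isPath_copy]
            exact (isPath_copy _ _ _).2 (hf _).tail
      case surj =>
        simp only [mem_edgeFinset, Finset.mem_compl, Finset.mem_singleton, Sym2.forall,
          SimpleGraph.mem_edgeSet]
        intros x y h
        wlog h' : (f x).length ≤ (f y).length generalizing x y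
        · rw [Sym2.eq_swap]
          exact this y x h.symm (le_of_not_ge h')
        refine ⟨y, ?_, dart_edge_eq_mk'_iff.2 <| Or.inr ?_⟩
        · rintro rfl
          rw [← hf' _ nil IsPath.nil, length_nil,
              ← hf' _ (.cons h .nil) (IsPath.nil.cons <| by simpa using h.ne),
              length_cons, length_nil] at h'
          simp [Nat.le_zero, Nat.one_ne_zero] at h'
        rw [← hf' _ (.cons h.symm (f x)) ((cons_isPath_iff _ _).2 ⟨hf _, fun hy => ?contra⟩)]
        · simp only [firstDart_toProd, getVert_cons_succ, getVert_zero, Prod.swap_prod_mk]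
        case contra =>
          suffices (f x).takeUntil y hy = .cons h .nil by
            rw [← take_spec _ hy] at h'
            simp [this, hf' _ _ ((hf _).dropUntil hy)] at h'
          refine (hG.existsUnique_path _ _).unique ((hf _).takeUntil _) ?_
          simp [h.ne]
      case val => intros; rfl
    rw [← hsum]
    refine Finset.sum_le_sum fun w hw => ?_
    have hnn : ¬ (f w).Nil := not_nil_of_ne (by simpa using hw)
    exact haz _ _ ((f w).adj_snd hnn)
  have hcompl : ∑ w ∈ ({r} : Finset V)ᶜ, a w = (∑ v : V, a v) - a r := by
    have := Finset.sum_compl_add_sum ({r} : Finset V) a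
    simp only [Finset.sum_singleton] at this
    linarith
  have h1 : ∑ e ∈ G.edgeFinset, z e ≤ (∑ v : V, a v) - a r := hcompl ▸ key
  have h2 : ∑ v : V, a v ≤ (Fintype.card V : ℝ) * a r := by
    calc ∑ v : V, a v ≤ ∑ _v : V, a r := Finset.sum_le_sum fun v _ => hr v (Finset.mem_univ v)
    _ = (Fintype.card V : ℝ) * a r := by
        rw [Finset.sum_const, nsmul_eq_mul, Finset.card_univ]
  have hp : (1:ℝ) ≤ (Fintype.card V : ℝ) := by
    exact_mod_cast Fintype.card_pos
  nlinarith [Finset.sum_nonneg fun e (he : e ∈ G.edgeFinset) =>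
    hz e (SimpleGraph.mem_edgeFinset.mp he)]
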